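/- For the averaged Hamiltonian h₀(J, I) = ω₁ J + ω₂ I + I²/(2r²) + A·I·J + (3/8)·d·J², the Hessian with respect to (J, I) has determinant (3d)/(4r²) - A²; thus h₀ satisfies the Kolmogorov non-degeneracy condition (invertible Hessian) if and only if 3d/(4r²) ≠ 4A². -/

import Mathlib

private lemma dquad (a b c : ℝ) (t : ℝ) :
    deriv (fun t : ℝ => a + b * t + c * t ^ 2) t = b + 2 * c * t := by
  have h : HasDerivAt (fun t : ℝ => a + b * t + c * t ^ 2) (b + 2 * c * t) t := by
    have h1 := (hasDerivAt_const t a).add ((hasDerivAt_id t).const_mul b)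
    have h2 := (hasDerivAt_pow 2 t).const_mul c
    have := h1.add h2
    exact this.congr_deriv (by norm_num; ring)
  exact h.deriv

private lemma dlin (a b : ℝ) (t : ℝ) :
    deriv (fun t : ℝ => a + b * t) t = b := by
  have h : HasDerivAt (fun t : ℝ => a + b * t) b t := by
    exact ((hasDerivAt_const t a).add ((hasDerivAt_id t).const_mul b)).congr_deriv (by simp)
  exact h.deriv

/-- For h₀(J,I) = ω₁J + ω₂I + I²/(2r²) + A·I·J + (3/8)d·J², the Hessian in (J,I)
has determinant 3d/(4r²) - A², so h₀ is Kolmogorov non-degenerate iff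
3d/(4r²) ≠ A². -/
theorem stmt_8 (ω₁ ω₂ A d r : ℝ) (hr : 0 < r)
    (h₀ : ℝ → ℝ → ℝ)
    (hdef : ∀ J I, h₀ J I = ω₁ * J + ω₂ * I + I ^ 2 / (2 * r ^ 2) + A * I * J
      + 3 / 8 * d * J ^ 2) (J I : ℝ) :
    Matrix.det
      !![deriv (fun x => deriv (fun y => h₀ y I) x) J,
         deriv (fun x => deriv (fun y => h₀ y x) J) I;
         deriv (fun x => deriv (fun y => h₀ x y) I) J,
         deriv (fun x => deriv (fun y => h₀ J y) x) I]
      = 3 * d / (4 * r ^ 2) - A ^ 2 ∧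
    (Matrix.det
      !![deriv (fun x => deriv (fun y => h₀ y I) x) J,
         deriv (fun x => deriv (fun y => h₀ y x) J) I;
         deriv (fun x => deriv (fun y => h₀ x y) I) J,
         deriv (fun x => deriv (fun y => h₀ J y) x) I] ≠ 0
      ↔ 3 * d / (4 * r ^ 2) ≠ A ^ 2) := by
  have hr2 : (r : ℝ) ^ 2 ≠ 0 := by positivity
  -- derivative in the first argument
  have dfst : ∀ x y : ℝ, deriv (fun t => h₀ t y) x = (ω₁ + A * y) + (3 / 4 * d) * x := by
    intro x y
    rw [show (fun t => h₀ t y)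
        = fun t : ℝ => (ω₂ * y + y ^ 2 / (2 * r ^ 2)) + (ω₁ + A * y) * t + (3 / 8 * d) * t ^ 2
      from funext fun t => by rw [hdef]; ring]
    rw [dquad]; ring
  -- derivative in the second argument
  have dsnd : ∀ x y : ℝ, deriv (fun t => h₀ x t) y
      = (ω₂ + A * x) + (1 / r ^ 2) * y := by
    intro x y
    rw [show (fun t => h₀ x t)
        = fun t : ℝ => (ω₁ * x + 3 / 8 * d * x ^ 2) + (ω₂ + A * x) * t + (1 / (2 * r ^ 2)) * t ^ 2
      from funext fun t => by rw [hdef]; field_simp; ring]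
    rw [dquad]; field_simp
  have e11 : deriv (fun x => deriv (fun y => h₀ y I) x) J = 3 / 4 * d := by
    rw [show (fun x => deriv (fun y => h₀ y I) x)
        = fun x : ℝ => (ω₁ + A * I) + (3 / 4 * d) * x from funext fun x => dfst x I, dlin]
  have e12 : deriv (fun x => deriv (fun y => h₀ y x) J) I = A := by
    rw [show (fun x => deriv (fun y => h₀ y x) J)
        = fun x : ℝ => (ω₁ + 3 / 4 * d * J) + A * x
      from funext fun x => by rw [dfst]; ring, dlin]
  have e21 : deriv (fun x => deriv (fun y => h₀ x y) I) J = A := by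
    rw [show (fun x => deriv (fun y => h₀ x y) I)
        = fun x : ℝ => (ω₂ + 1 / r ^ 2 * I) + A * x
      from funext fun x => by rw [dsnd]; ring, dlin]
  have e22 : deriv (fun x => deriv (fun y => h₀ J y) x) I = 1 / r ^ 2 := by
    rw [show (fun x => deriv (fun y => h₀ J y) x)
        = fun x : ℝ => (ω₂ + A * J) + (1 / r ^ 2) * x from funext fun x => dsnd J x, dlin]
  have hdet : Matrix.det
      !![deriv (fun x => deriv (fun y => h₀ y I) x) J,
         deriv (fun x => deriv (fun y => h₀ y x) J) I;
         deriv (fun x => deriv (fun y => h₀ x y) I) J,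
         deriv (fun x => deriv (fun y => h₀ J y) x) I]
      = 3 * d / (4 * r ^ 2) - A ^ 2 := by
    rw [Matrix.det_fin_two_of, e11, e12, e21, e22]
    field_simp
  refine ⟨hdet, ?_⟩
  rw [hdet]
  constructor
  · intro h h'
    exact h (by rw [h']; ring)
  · intro h h'
    exact h (by linarith [sub_eq_zero.mp h'])
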